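/- Let ρ = ∑_j μ_j (|ζ_j⟩⟨ζ_j|)^{⊗2} be a 4-qubit state where each |ζ_j⟩ = α_j|Φ⁻⟩ + β_j e^{iθ_j}|Ψ⁺⟩ with α_j, β_j ∈ [0,1], α_j²+β_j² = 1, θ_j ∈ [0,2π), and ∑_j μ_j = 1, μ_j ≥ 0. Then the trace distance between the reduced state of ρ on the first qubit of each pair (tracing out the second and fourth qubits) and the two-qubit maximally mixed state (I/2)^{⊗2} is at least 2 ∑_j μ_j α_j² β_j² sin²θ_j. -/

import Mathlib

open Matrix
open Kronecker
open scoped ComplexOrder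

/-- The trace norm `‖A‖₁ = tr √(A†A)` of a complex matrix. -/
noncomputable def traceNorm {m : Type*} [Fintype m] [DecidableEq m]
    (A : Matrix m m ℂ) : ℝ :=
  (((Matrix.posSemidef_conjTranspose_mul_self A).1.eigenvectorUnitary.1 *
      Matrix.diagonal (((↑) : ℝ → ℂ) ∘ Real.sqrt ∘ (Matrix.posSemidef_conjTranspose_mul_self A).1.eigenvalues) *
      (star (Matrix.posSemidef_conjTranspose_mul_self A).1.eigenvectorUnitary : Matrix m m ℂ)).trace).re

/-- The trace distance `D(ρ, σ) = ½‖ρ − σ‖₁`. -/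
noncomputable def traceDist {m : Type*} [Fintype m] [DecidableEq m]
    (A B : Matrix m m ℂ) : ℝ := traceNorm (A - B) / 2

/-- Partial trace over the registers `S'₁, S'₂` of a state on
`(S₁, S'₁, S₂, S'₂)`, yielding the reduced state on `(S₁, S₂)`. -/
noncomputable def reduce
    (ρ : Matrix ((Fin 2 × Fin 2) × (Fin 2 × Fin 2)) ((Fin 2 × Fin 2) × (Fin 2 × Fin 2)) ℂ) :
    Matrix (Fin 2 × Fin 2) (Fin 2 × Fin 2) ℂ :=
  fun p q => ∑ s : Fin 2, ∑ t : Fin 2, ρ ((p.1, s), (p.2, t)) ((q.1, s), (q.2, t))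

/-- The computational basis state `|ij⟩` of two qubits. -/
def ket (i j : Fin 2) : Fin 2 × Fin 2 → ℂ := fun p => if p = (i, j) then 1 else 0

/-- The Bell state `|Φ⁻⟩ = (|00⟩−|11⟩)/√2`. -/
noncomputable def PhiMinus : Fin 2 × Fin 2 → ℂ :=
  ((Real.sqrt 2 : ℂ))⁻¹ • (ket 0 0 - ket 1 1)

/-- The Bell state `|Ψ⁺⟩ = (|01⟩+|10⟩)/√2`. -/
noncomputable def PsiPlus : Fin 2 × Fin 2 → ℂ :=
  ((Real.sqrt 2 : ℂ))⁻¹ • (ket 0 1 + ket 1 0)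

/-! ### Auxiliary machinery -/

/-- The Pauli matrix `σ_y`. -/
noncomputable def Y : Matrix (Fin 2) (Fin 2) ℂ := !![0, -Complex.I; Complex.I, 0]

/-- The projector onto the `+1` eigenspace of `σ_y`. -/
noncomputable def Pp : Matrix (Fin 2) (Fin 2) ℂ := !![1/2, -Complex.I/2; Complex.I/2, 1/2]

/-- The projector onto the `-1` eigenspace of `σ_y`. -/
noncomputable def Pm : Matrix (Fin 2) (Fin 2) ℂ := !![1/2, Complex.I/2; -Complex.I/2, 1/2]

lemma Pp_mul_Pp : Pp * Pp = Pp := by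
  ext i j; fin_cases i <;> fin_cases j <;>
    simp [Pp, Matrix.mul_apply, Fin.sum_univ_two] <;> ring_nf <;>
    simp [Complex.I_sq] <;> norm_num

lemma Pm_mul_Pm : Pm * Pm = Pm := by
  ext i j; fin_cases i <;> fin_cases j <;>
    simp [Pm, Matrix.mul_apply, Fin.sum_univ_two] <;> ring_nf <;>
    simp [Complex.I_sq] <;> norm_num

lemma Pp_mul_Pm : Pp * Pm = 0 := by
  ext i j; fin_cases i <;> fin_cases j <;>
    simp [Pp, Pm, Matrix.mul_apply, Fin.sum_univ_two] <;> ring_nf <;>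
    simp [Complex.I_sq] <;> ring

lemma Pm_mul_Pp : Pm * Pp = 0 := by
  ext i j; fin_cases i <;> fin_cases j <;>
    simp [Pp, Pm, Matrix.mul_apply, Fin.sum_univ_two] <;> ring_nf <;>
    simp [Complex.I_sq] <;> ring

lemma Pp_herm : Ppᴴ = Pp := by
  ext i j; fin_cases i <;> fin_cases j <;> simp [Pp, Matrix.conjTranspose_apply]

lemma Pm_herm : Pmᴴ = Pm := by
  ext i j; fin_cases i <;> fin_cases j <;> simp [Pm, Matrix.conjTranspose_apply]

lemma Pp_trace : Pp.trace = 1 := by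
  simp [Pp, Matrix.trace, Fin.sum_univ_two]; ring

lemma Pm_trace : Pm.trace = 1 := by
  simp [Pm, Matrix.trace, Fin.sum_univ_two]; ring

lemma kron_ct {A B : Matrix (Fin 2) (Fin 2) ℂ} : (A ⊗ₖ B)ᴴ = Aᴴ ⊗ₖ Bᴴ := by
  ext ⟨i1, i2⟩ ⟨j1, j2⟩
  simp [Matrix.conjTranspose_apply, Matrix.kroneckerMap_apply, mul_comm]

/-- The matrix `Δ = reduce ρ − (I/4)` in the eigenbasis of `σ_y ⊗ σ_y`. -/
noncomputable def Del (S1 S2 : ℝ) : Matrix (Fin 2 × Fin 2) (Fin 2 × Fin 2) ℂ :=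
  ((S1 + S2 : ℝ) : ℂ) • (Pp ⊗ₖ Pp) + ((-S2 : ℝ) : ℂ) • (Pp ⊗ₖ Pm)
    + ((-S2 : ℝ) : ℂ) • (Pm ⊗ₖ Pp) + ((S2 - S1 : ℝ) : ℂ) • (Pm ⊗ₖ Pm)

/-- The absolute value `|Δ|`, which is the square root of `Δᴴ Δ`. -/
noncomputable def Bm (S1 S2 : ℝ) : Matrix (Fin 2 × Fin 2) (Fin 2 × Fin 2) ℂ :=
  ((|S1 + S2| : ℝ) : ℂ) • (Pp ⊗ₖ Pp) + ((|S2| : ℝ) : ℂ) • (Pp ⊗ₖ Pm)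
    + ((|S2| : ℝ) : ℂ) • (Pm ⊗ₖ Pp) + ((|S2 - S1| : ℝ) : ℂ) • (Pm ⊗ₖ Pm)

lemma Del_herm (S1 S2 : ℝ) : (Del S1 S2)ᴴ = Del S1 S2 := by
  simp [Del, Matrix.conjTranspose_add, Matrix.conjTranspose_smul, kron_ct,
    Pp_herm, Pm_herm, Complex.star_def, Complex.conj_ofReal]

lemma sqB (S1 S2 : ℝ) : (Bm S1 S2) ^ 2 = (Del S1 S2)ᴴ * (Del S1 S2) := by
  rw [Del_herm, pow_two]
  simp only [Bm, Del, Matrix.add_mul, Matrix.mul_add, Matrix.smul_mul, Matrix.mul_smul,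
    ← Matrix.mul_kronecker_mul, Pp_mul_Pp, Pm_mul_Pm, Pp_mul_Pm, Pm_mul_Pp,
    Matrix.zero_kronecker, Matrix.kronecker_zero, smul_zero, add_zero, zero_add, smul_smul]
  have h : ∀ a : ℝ, ((|a| : ℝ) : ℂ) * ((|a| : ℝ) : ℂ) = ((a : ℝ) : ℂ) * ((a : ℝ) : ℂ) := by
    intro a
    rw [← Complex.ofReal_mul, abs_mul_abs_self, Complex.ofReal_mul]
  simp only [h]
  push_cast [neg_mul_neg]
  rfl

lemma smul_psd {n : Type*} [Fintype n] (c : ℝ) (hc : 0 ≤ c)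
    {A : Matrix n n ℂ} (hA : A.PosSemidef) : ((c : ℂ) • A).PosSemidef := by
  constructor
  · unfold Matrix.IsHermitian
    rw [Matrix.conjTranspose_smul, hA.1]
    congr 1
    simp [Complex.star_def, Complex.conj_ofReal]
  · intro x
    exact (hA.smul (a := (c : ℂ)) (by exact_mod_cast Complex.zero_le_real.mpr hc)).2 x

lemma proj_psd {n : Type*} [Fintype n] [DecidableEq n] {Q : Matrix n n ℂ}
    (h1 : Qᴴ = Q) (h2 : Q * Q = Q) : Q.PosSemidef := by
  have := Matrix.posSemidef_conjTranspose_mul_self Q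
  rwa [h1, h2] at this

lemma Qpp_psd : (Pp ⊗ₖ Pp).PosSemidef :=
  proj_psd (by rw [kron_ct, Pp_herm]) (by rw [← Matrix.mul_kronecker_mul, Pp_mul_Pp])
lemma Qpm_psd : (Pp ⊗ₖ Pm).PosSemidef :=
  proj_psd (by rw [kron_ct, Pp_herm, Pm_herm])
    (by rw [← Matrix.mul_kronecker_mul, Pp_mul_Pp, Pm_mul_Pm])
lemma Qmp_psd : (Pm ⊗ₖ Pp).PosSemidef :=
  proj_psd (by rw [kron_ct, Pp_herm, Pm_herm])
    (by rw [← Matrix.mul_kronecker_mul, Pp_mul_Pp, Pm_mul_Pm])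
lemma Qmm_psd : (Pm ⊗ₖ Pm).PosSemidef :=
  proj_psd (by rw [kron_ct, Pm_herm]) (by rw [← Matrix.mul_kronecker_mul, Pm_mul_Pm])

lemma psdB (S1 S2 : ℝ) : (Bm S1 S2).PosSemidef := by
  unfold Bm
  exact (((smul_psd _ (abs_nonneg _) Qpp_psd).add
    (smul_psd _ (abs_nonneg _) Qpm_psd)).add
    (smul_psd _ (abs_nonneg _) Qmp_psd)).add
    (smul_psd _ (abs_nonneg _) Qmm_psd)

open scoped MatrixOrder Matrix.Norms.L2Operator

lemma traceNorm_Del (S1 S2 : ℝ) :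
    traceNorm (Del S1 S2) = |S1 + S2| + |S2| + |S2| + |S2 - S1| := by
  unfold traceNorm
  have h1 : CFC.sqrt ((Del S1 S2)ᴴ * Del S1 S2) = Bm S1 S2 :=
    CFC.sqrt_unique (a := (Del S1 S2)ᴴ * Del S1 S2) (b := Bm S1 S2) (by rw [← pow_two, sqB])
      (Matrix.nonneg_iff_posSemidef.mpr (psdB S1 S2))
  rw [CFC.sqrt_eq_real_sqrt _ (Matrix.nonneg_iff_posSemidef.mpr
      (Matrix.posSemidef_conjTranspose_mul_self _)), cfcₙ_eq_cfc,
    (Matrix.posSemidef_conjTranspose_mul_self (Del S1 S2)).1.cfc_eq,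
    Matrix.IsHermitian.cfc, Unitary.conjStarAlgAut_apply] at h1
  erw [h1]
  simp [Bm, Matrix.trace_add, Matrix.trace_smul, Matrix.trace_kronecker,
    Pp_trace, Pm_trace, smul_eq_mul]

lemma hg (a b t : ℝ) (hab : a ^ 2 + b ^ 2 = 1)
    (ζ : Fin 2 × Fin 2 → ℂ)
    (hζ : ζ = (a : ℂ) • PhiMinus + ((b : ℂ) * Complex.exp ((t : ℂ) * Complex.I)) • PsiPlus)
    (i c : Fin 2) :
    (∑ u : Fin 2, ζ (i, u) * star (ζ (c, u)))
      = (1/2 : ℂ) * (if i = c then 1 else 0) + ((a * b * Real.sin t : ℝ) : ℂ) * Y i c := by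
  have q : Real.sqrt 2 * Real.sqrt 2 = 2 := Real.mul_self_sqrt (by norm_num)
  have pyth := Real.sin_sq_add_cos_sq t
  subst hζ
  fin_cases i <;> fin_cases c <;>
    [skip; skip; skip; skip] <;>
    simp [PhiMinus, PsiPlus, ket, Y, Fin.sum_univ_two, Complex.exp_mul_I, Complex.ext_iff,
      Prod.ext_iff, star_add, star_mul', map_add, _root_.map_mul, Complex.conj_ofReal,
      Complex.conj_I, ← Complex.ofReal_cos, ← Complex.ofReal_sin] <;>
    field_simp
  · exact ⟨by linear_combination (a^2 + (b*Real.cos t)^2 + (b*Real.sin t)^2) * q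
      + 2*b^2 * pyth + 2*hab, by ring⟩
  · exact ⟨by ring, by linear_combination (-2*a*b*Real.sin t) * q⟩
  · exact ⟨by ring, by linear_combination (2*a*b*Real.sin t) * q⟩
  · exact ⟨by linear_combination (a^2 + (b*Real.cos t)^2 + (b*Real.sin t)^2) * q
      + 2*b^2 * pyth + 2*hab, by ring⟩

lemma sum_expand {J : Type*} [Fintype J] (μ s : J → ℝ) (A1 A2 B1 B2 : ℂ) :
    ∑ j, (μ j : ℂ) * ((A1 + (s j : ℂ) * B1) * (A2 + (s j : ℂ) * B2))
      = ((∑ j, μ j : ℝ) : ℂ) * (A1 * A2)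
        + ((∑ j, μ j * s j : ℝ) : ℂ) * (A1 * B2 + B1 * A2)
        + ((∑ j, μ j * s j ^ 2 : ℝ) : ℂ) * (B1 * B2) := by
  push_cast
  rw [Finset.sum_mul, Finset.sum_mul, Finset.sum_mul, ← Finset.sum_add_distrib,
    ← Finset.sum_add_distrib]
  exact Finset.sum_congr rfl fun j _ => by ring

/-- For `ρ = ∑_j μ_j (|ζ_j⟩⟨ζ_j|)^{⊗2}` with
`|ζ_j⟩ = α_j|Φ⁻⟩ + β_j e^{iθ_j}|Ψ⁺⟩`, the trace distance between the reduced
state of `ρ` on `(S₁, S₂)` and `(I/2)^{⊗2}` is at least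
`2 ∑_j μ_j α_j² β_j² sin²θ_j`. -/
theorem stmt15 {J : Type*} [Fintype J] (μ α β θ : J → ℝ)
    (hμ0 : ∀ j, 0 ≤ μ j) (hμ1 : ∑ j, μ j = 1)
    (hα : ∀ j, α j ∈ Set.Icc (0 : ℝ) 1) (hβ : ∀ j, β j ∈ Set.Icc (0 : ℝ) 1)
    (hαβ : ∀ j, α j ^ 2 + β j ^ 2 = 1) (hθ : ∀ j, θ j ∈ Set.Ico 0 (2 * Real.pi))
    (ζ : J → (Fin 2 × Fin 2 → ℂ))
    (hζ : ∀ j, ζ j = (α j : ℂ) • PhiMinus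
        + ((β j : ℂ) * Complex.exp ((θ j : ℂ) * Complex.I)) • PsiPlus)
    (ρ : Matrix ((Fin 2 × Fin 2) × (Fin 2 × Fin 2)) ((Fin 2 × Fin 2) × (Fin 2 × Fin 2)) ℂ)
    (hρ : ρ = ∑ j, μ j • (Matrix.vecMulVec (ζ j) (star (ζ j)) ⊗ₖ
        Matrix.vecMulVec (ζ j) (star (ζ j)))) :
    2 * ∑ j, μ j * α j ^ 2 * β j ^ 2 * Real.sin (θ j) ^ 2
      ≤ traceDist (reduce ρ) ((1 / 4 : ℂ) • 1) := by
  classical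
  set s : J → ℝ := fun j => α j * β j * Real.sin (θ j) with hs
  set S1 : ℝ := ∑ j, μ j * s j with hS1
  set S2 : ℝ := ∑ j, μ j * s j ^ 2 with hS2
  have hgj : ∀ j (i c : Fin 2), (∑ u : Fin 2, ζ j (i, u) * star (ζ j (c, u)))
      = (1/2 : ℂ) * (if i = c then 1 else 0) + ((s j : ℝ) : ℂ) * Y i c :=
    fun j => hg (α j) (β j) (θ j) (hαβ j) (ζ j) (hζ j)
  have key : reduce ρ - (1 / 4 : ℂ) • 1 = Del S1 S2 := by
    ext ⟨p1, p2⟩ ⟨q1, q2⟩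
    have e1 : reduce ρ (p1, p2) (q1, q2)
        = ∑ j, (μ j : ℂ) * ((∑ u : Fin 2, ζ j (p1, u) * star (ζ j (q1, u)))
            * (∑ u : Fin 2, ζ j (p2, u) * star (ζ j (q2, u)))) := by
      simp only [hρ, reduce, Matrix.sum_apply, Matrix.smul_apply, Matrix.kroneckerMap_apply,
        Matrix.vecMulVec_apply, Pi.star_apply, Complex.real_smul, Fin.sum_univ_two]
      rw [← Finset.sum_add_distrib, ← Finset.sum_add_distrib, ← Finset.sum_add_distrib]
      exact Finset.sum_congr rfl fun j _ => by ring
    rw [Matrix.sub_apply, e1]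
    simp only [hgj]
    rw [sum_expand μ s ((1/2 : ℂ) * (if p1 = q1 then 1 else 0))
      ((1/2 : ℂ) * (if p2 = q2 then 1 else 0)) (Y p1 q1) (Y p2 q2), hμ1, ← hS1, ← hS2]
    fin_cases p1 <;> fin_cases p2 <;> fin_cases q1 <;> fin_cases q2 <;>
      simp [Del, Pp, Pm, Y, Matrix.kroneckerMap_apply, Matrix.one_apply, Prod.ext_iff] <;>
      push_cast <;> ring_nf <;> simp [Complex.I_sq]
  have hdist : traceDist (reduce ρ) ((1 / 4 : ℂ) • 1)
      = (|S1 + S2| + |S2| + |S2| + |S2 - S1|) / 2 := by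
    unfold traceDist
    rw [key, traceNorm_Del]
  rw [hdist]
  have hS2eq : ∑ j, μ j * α j ^ 2 * β j ^ 2 * Real.sin (θ j) ^ 2 = S2 := by
    rw [hS2]
    exact Finset.sum_congr rfl fun j _ => by simp only [hs]; ring
  rw [hS2eq]
  have h1 : |S1 + S2 + (S2 - S1)| ≤ |S1 + S2| + |S2 - S1| := abs_add_le _ _
  have h2 : S1 + S2 + (S2 - S1) = 2 * S2 := by ring
  have h3 : 2 * S2 ≤ |2 * S2| := le_abs_self _
  have h4 : S2 ≤ |S2| := le_abs_self _
  rw [h2] at h1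
  linarith
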